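/- Let F• be a finite chain complex of finitely generated free modules over a ring R with a chosen basis B, such that fₙ(b) ≠ 0 for all n ≥ 1 and b ∈ Bₙ. Then in the incidence poset P(F•, B), whenever a ≤ b, every maximal chain in P starting at a and ending at b has length d(b) − d(a), where d(x) = dim Δ(P_{≤x}). -/

import Mathlib

open scoped Classical

noncomputable section

namespace OrderComplex

variable {P : Type} (r : P → P → Prop)

/-- Dimension of the order complex of the induced subposet on `S`
(the empty complex has dimension `-1`). -/
def dimOC (S : Set P) : ℤ :=
  sSup {n : ℤ | ∃ s : Finset P, ↑s ⊆ S ∧ IsChain r ↑s ∧ n = (s.card : ℤ) - 1}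

end OrderComplex

namespace IncidencePoset

open OrderComplex

variable {A : Type} [CommRing A] {ι : ℕ → Type}

/-- The covering relation generating the incidence poset of a complex of based
free modules: `x ⋖ y` iff `y` is a basis element one degree above `x` and the
incidence coefficient `[y : x]` is nonzero. -/
def step (f : ∀ n, (ι (n + 1) →₀ A) →ₗ[A] (ι n →₀ A)) :
    (Σ n, ι n) → (Σ n, ι n) → Prop := fun x y =>
  ∃ (n : ℕ) (b : ι (n + 1)) (e : ι n),
    y = ⟨n + 1, b⟩ ∧ x = ⟨n, e⟩ ∧ e ∈ (f n (Finsupp.single b 1)).support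

/-- The partial order of the incidence poset `P(F, B)`: the order generated by
the relations `e < b` whenever `[b : e] ≠ 0`. -/
def ile (f : ∀ n, (ι (n + 1) →₀ A) →ₗ[A] (ι n →₀ A)) :
    (Σ n, ι n) → (Σ n, ι n) → Prop :=
  Relation.ReflTransGen (step f)

/-- Strict order of the incidence poset. -/
def ilt (f : ∀ n, (ι (n + 1) →₀ A) →ₗ[A] (ι n →₀ A)) :
    (Σ n, ι n) → (Σ n, ι n) → Prop :=
  Relation.TransGen (step f)

end IncidencePoset

namespace IncidencePoset

open OrderComplex

variable {A : Type} [CommRing A] {ι : ℕ → Type}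
variable {f : ∀ n, (ι (n + 1) →₀ A) →ₗ[A] (ι n →₀ A)}

lemma step_fst {x y : Σ n, ι n} (h : step f x y) : x.1 + 1 = y.1 := by
  obtain ⟨n, c, e, hy, hx, -⟩ := h
  subst hy; subst hx; rfl

lemma ile_fst {x y : Σ n, ι n} (h : ile f x y) : x.1 ≤ y.1 := by
  induction h with
  | refl => exact le_refl _
  | tail h1 h2 ih => have := step_fst h2; omega

lemma ile_fst_lt {x y : Σ n, ι n} (h : ile f x y) (hne : x ≠ y) : x.1 < y.1 := by
  rcases Relation.ReflTransGen.cases_head h with rfl | ⟨c, hc, hcy⟩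
  · exact absurd rfl hne
  · have h1 := step_fst hc
    have h2 := ile_fst hcy
    omega

lemma exists_chain (hnz : ∀ (n : ℕ) (b : ι (n + 1)), f n (Finsupp.single b 1) ≠ 0) :
    ∀ (n : ℕ) (b : ι n), ∃ s : Finset (Σ n, ι n),
      (∀ x ∈ s, ile f x ⟨n, b⟩) ∧ IsChain (ile f) ↑s ∧ s.card = n + 1 := by
  intro n
  induction n with
  | zero =>
    intro b
    refine ⟨{⟨0, b⟩}, ?_, ?_, by simp⟩
    · intro x hx
      rw [Finset.mem_singleton] at hx
      subst hx
      exact Relation.ReflTransGen.refl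
    · simp only [Finset.coe_singleton]
      intro x hx y hy hne
      rw [Set.mem_singleton_iff] at hx hy
      exact absurd (hx.trans hy.symm) hne
  | succ n ih =>
    intro b
    obtain ⟨e, he⟩ := Finsupp.support_nonempty_iff.mpr (hnz n b)
    obtain ⟨s, hs1, hs2, hs3⟩ := ih e
    have hstep : step f ⟨n, e⟩ ⟨n + 1, b⟩ := ⟨n, b, e, rfl, rfl, he⟩
    have hle : ∀ x ∈ s, ile f x ⟨n + 1, b⟩ := fun x hx =>
      (hs1 x hx).trans (Relation.ReflTransGen.single hstep)
    have hb : (⟨n + 1, b⟩ : Σ n, ι n) ∉ s := by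
      intro h
      have := ile_fst (hs1 _ h)
      simp only [] at this
      omega
    refine ⟨insert ⟨n + 1, b⟩ s, ?_, ?_, ?_⟩
    · intro x hx
      rcases Finset.mem_insert.mp hx with rfl | hx
      · exact Relation.ReflTransGen.refl
      · exact hle x hx
    · rw [Finset.coe_insert]
      exact hs2.insert fun x hx _ => Or.inr (hle x (Finset.mem_coe.mp hx))
    · rw [Finset.card_insert_of_notMem hb, hs3]

lemma chain_card_le {b : Σ n, ι n} {s : Finset (Σ n, ι n)}
    (hsub : ∀ x ∈ s, ile f x b) (hch : IsChain (ile f) ↑s) : s.card ≤ b.1 + 1 := by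
  have h : s.card ≤ (Finset.range (b.1 + 1)).card := by
    apply Finset.card_le_card_of_injOn (fun x => x.1)
    · intro x hx
      simp only [Finset.mem_coe, Finset.mem_range]
      exact Nat.lt_succ_of_le (ile_fst (hsub x hx))
    · intro x hx y hy hxy
      by_contra hne
      rcases hch hx hy hne with h | h
      · exact absurd hxy (Nat.ne_of_lt (ile_fst_lt h hne))
      · exact absurd hxy.symm (Nat.ne_of_lt (ile_fst_lt h (Ne.symm hne)))
  simpa using h

lemma dim_downset (hnz : ∀ (n : ℕ) (b : ι (n + 1)), f n (Finsupp.single b 1) ≠ 0)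
    (b : Σ n, ι n) : dimOC (ile f) {x | ile f x b} = (b.1 : ℤ) := by
  obtain ⟨s, hs1, hs2, hs3⟩ := exists_chain hnz b.1 b.2
  rw [Sigma.eta b] at hs1
  have hmem : (b.1 : ℤ) ∈ {n : ℤ | ∃ s : Finset (Σ n, ι n),
      ↑s ⊆ {x | ile f x b} ∧ IsChain (ile f) ↑s ∧ n = (s.card : ℤ) - 1} :=
    ⟨s, fun x hx => hs1 x (Finset.mem_coe.mp hx), hs2, by rw [hs3]; push_cast; ring⟩
  have hub : ∀ n ∈ {n : ℤ | ∃ s : Finset (Σ n, ι n),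
      ↑s ⊆ {x | ile f x b} ∧ IsChain (ile f) ↑s ∧ n = (s.card : ℤ) - 1},
      n ≤ (b.1 : ℤ) := by
    rintro n ⟨t, ht1, ht2, rfl⟩
    have := chain_card_le (fun x hx => ht1 (Finset.mem_coe.mpr hx)) ht2
    omega
  exact le_antisymm (csSup_le ⟨_, hmem⟩ hub) (le_csSup ⟨_, hub⟩ hmem)

end IncidencePoset

namespace IncidencePoset

open OrderComplex

/-- in the incidence poset of a finite chain complex of finitely
generated free modules with basis whose differentials do not kill basis
elements, whenever `a ≤ b`, every maximal (i.e. saturated) chain from `a` to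
`b` has length `d(b) - d(a)`, where `d(x) = dim Δ(P_{≤x})`. -/
theorem maximal_chain_length_eq
    (A : Type) [CommRing A] (ι : ℕ → Type) [∀ n, Fintype (ι n)]
    (f : ∀ n, (ι (n + 1) →₀ A) →ₗ[A] (ι n →₀ A))
    (l0 : ℕ) (hl : ∀ n, l0 < n → IsEmpty (ι n))
    (hnz : ∀ (n : ℕ) (b : ι (n + 1)), f n (Finsupp.single b 1) ≠ 0) :
    ∀ (a b : Σ n, ι n), ile f a b →
      ∀ (l : ℕ) (g : Fin (l + 1) → (Σ n, ι n)),
        g 0 = a → g (Fin.last l) = b →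
        (∀ i : Fin l, ilt f (g i.castSucc) (g i.succ)) →
        (∀ i : Fin l, ¬ ∃ z, ilt f (g i.castSucc) z ∧ ilt f z (g i.succ)) →
        (l : ℤ) = dimOC (ile f) {x | ile f x b} - dimOC (ile f) {x | ile f x a} := by
  intro a b hab l g hg0 hgl hlt hsat
  have hstep : ∀ i : Fin l, step f (g i.castSucc) (g i.succ) := by
    intro i
    obtain ⟨c, hac, hcb⟩ := Relation.TransGen.head'_iff.mp (hlt i)
    rcases Relation.ReflTransGen.cases_head hcb with rfl | ⟨d, hcd, hdy⟩
    · exact hac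
    · exact absurd ⟨c, Relation.TransGen.single hac,
        Relation.TransGen.head' hcd hdy⟩ (hsat i)
  have key : ∀ k (hk : k ≤ l), (g ⟨k, Nat.lt_succ_of_le hk⟩).1 = a.1 + k := by
    intro k
    induction k with
    | zero =>
      intro hk
      have h0 : (⟨0, Nat.lt_succ_of_le hk⟩ : Fin (l + 1)) = 0 := rfl
      rw [h0, hg0, Nat.add_zero]
    | succ k ih =>
      intro hk
      have hk' : k < l := hk
      have hs := step_fst (hstep ⟨k, hk'⟩)
      have h1 : (⟨k, hk'⟩ : Fin l).castSucc = ⟨k, Nat.lt_succ_of_le (le_of_lt hk')⟩ := rfl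
      have h2 : (⟨k, hk'⟩ : Fin l).succ = ⟨k + 1, Nat.lt_succ_of_le hk⟩ := rfl
      rw [h1, h2, ih (le_of_lt hk')] at hs
      omega
  have hb1 : b.1 = a.1 + l := by
    have hkey := key l le_rfl
    have hL : (⟨l, Nat.lt_succ_of_le le_rfl⟩ : Fin (l + 1)) = Fin.last l := rfl
    rw [hL, hgl] at hkey
    omega
  rw [dim_downset hnz a, dim_downset hnz b]
  omega

end IncidencePoset
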